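/- Let X' and X'' be vertices and set D(X',X'') = {Δ ∈ 𝒟⁺ : Δ ⊆ C⁺_{X'} and X'' lies in the closure of Δ}. Let H be an arrangement hyperplane with X'' ∈ H and X' ∉ H. Then for every Δ ∈ D(X',X'') there exists a unique Δ̃ ∈ D(X',X'') with Δ̃ ≠ Δ such that ℋ(Δ,Δ̃) = {H} (i.e. H is the only arrangement hyperplane separating Δ from Δ̃); consequently the map Δ ↦ Δ̃ is a fixed-point-free involution of D(X',X''), and D(X',X'') is partitioned into pairs of domains adjacent across H. -/

import Mathlib

open Set MeasureTheory Filter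
open scoped Classical Real

noncomputable section

namespace HypArr

variable {k N : ℕ}

/-- The hyperplane `H j = f j ⁻¹ (0)` of the `j`-th affine form. -/
def Hyp (f : Fin N → ((Fin k → ℝ) →ᵃ[ℝ] ℝ)) (j : Fin N) : Set (Fin k → ℝ) :=
  {x | f j x = 0}

/-- The complement `ℝ^k ∖ (H 1 ∪ ⋯ ∪ H N)` of the union of all the hyperplanes. -/
def HypCompl (f : Fin N → ((Fin k → ℝ) →ᵃ[ℝ] ℝ)) : Set (Fin k → ℝ) :=
  {x | ∀ j, f j x ≠ 0}

/-- `Δ` is an arrangement domain: a connected component of `ℝ^k ∖ (H 1 ∪ ⋯ ∪ H N)`. -/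
def IsDomain (f : Fin N → ((Fin k → ℝ) →ᵃ[ℝ] ℝ)) (Δ : Set (Fin k → ℝ)) : Prop :=
  ∃ x ∈ HypCompl f, Δ = connectedComponentIn (HypCompl f) x

/-- The hyperplanes `H 1, …, H N` are in generic position in `ℝ^k`: they are pairwise
distinct, any `k` of them intersect in exactly one point, and any `k+1` of them have
empty intersection. -/
def Generic (f : Fin N → ((Fin k → ℝ) →ᵃ[ℝ] ℝ)) : Prop :=
  (∀ i j : Fin N, i ≠ j → Hyp f i ≠ Hyp f j) ∧
  (∀ S : Finset (Fin N), S.card = k → ∃! x : Fin k → ℝ, ∀ j ∈ S, f j x = 0) ∧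
  (∀ S : Finset (Fin N), S.card = k + 1 → ¬ ∃ x : Fin k → ℝ, ∀ j ∈ S, f j x = 0)

/-- `X` is a vertex of the arrangement. -/
def IsVertex (f : Fin N → ((Fin k → ℝ) →ᵃ[ℝ] ℝ)) (X : Fin k → ℝ) : Prop :=
  ∃ S : Finset (Fin N), S.card = k ∧ ∀ j ∈ S, f j X = 0

/-- `X` is the vertex of the arrangement with index set `S`. -/
def IsVertexOf (f : Fin N → ((Fin k → ℝ) →ᵃ[ℝ] ℝ)) (S : Finset (Fin N))
    (X : Fin k → ℝ) : Prop :=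
  S.card = k ∧ ∀ j ∈ S, f j X = 0

/-- The linear form `f0` is in general position with respect to the arrangement:
it takes pairwise distinct values at the vertices and is nonconstant on each
line `L_U = ∩_{j ∈ U} H j` for `U` of cardinality `k - 1`. -/
def GenericLin (f : Fin N → ((Fin k → ℝ) →ᵃ[ℝ] ℝ)) (f0 : (Fin k → ℝ) →ₗ[ℝ] ℝ) : Prop :=
  (∀ X Y : Fin k → ℝ, IsVertex f X → IsVertex f Y → X ≠ Y → f0 X ≠ f0 Y) ∧
  ∀ U : Finset (Fin N), U.card = k - 1 →
    ∃ x y : Fin k → ℝ, (∀ j ∈ U, f j x = 0) ∧ (∀ j ∈ U, f j y = 0) ∧ f0 x ≠ f0 y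

/-- `C` is a connected component of `ℝ^k ∖ ⋃_{j ∈ S} H j`. -/
def IsConeComp (f : Fin N → ((Fin k → ℝ) →ᵃ[ℝ] ℝ)) (S : Finset (Fin N))
    (C : Set (Fin k → ℝ)) : Prop :=
  ∃ y, (∀ j ∈ S, f j y ≠ 0) ∧ C = connectedComponentIn {z | ∀ j ∈ S, f j z ≠ 0} y

/-- `C` is the cone `C⁺_X` of the vertex `X` with index set `S`: the unique connected
component of `ℝ^k ∖ ⋃_{j ∈ S} H j` on which `f0 - f0 X` is everywhere positive. -/
def IsPosCone (f : Fin N → ((Fin k → ℝ) →ᵃ[ℝ] ℝ)) (f0 : (Fin k → ℝ) →ₗ[ℝ] ℝ)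
    (S : Finset (Fin N)) (X : Fin k → ℝ) (C : Set (Fin k → ℝ)) : Prop :=
  IsConeComp f S C ∧ ∀ y ∈ C, f0 X < f0 y

/-- `C` is the cone `C⁻_X` of the vertex `X` with index set `S`: the unique connected
component of `ℝ^k ∖ ⋃_{j ∈ S} H j` on which `f0 - f0 X` is everywhere negative. -/
def IsNegCone (f : Fin N → ((Fin k → ℝ) →ᵃ[ℝ] ℝ)) (f0 : (Fin k → ℝ) →ₗ[ℝ] ℝ)
    (S : Finset (Fin N)) (X : Fin k → ℝ) (C : Set (Fin k → ℝ)) : Prop :=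
  IsConeComp f S C ∧ ∀ y ∈ C, f0 y < f0 X

/-- `Δ` is the domain `Δ_X` of the vertex `X`: the unique arrangement domain whose
closure contains `X` and on which `f0 - f0 X > 0`. -/
def IsDomOf (f : Fin N → ((Fin k → ℝ) →ᵃ[ℝ] ℝ)) (f0 : (Fin k → ℝ) →ₗ[ℝ] ℝ)
    (X : Fin k → ℝ) (Δ : Set (Fin k → ℝ)) : Prop :=
  IsDomain f Δ ∧ X ∈ closure Δ ∧ ∀ y ∈ Δ, f0 X < f0 y

/-- `Δ` is the domain `Δ⁻_X` of the vertex `X`: the unique arrangement domain whose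
closure contains `X` and on which `f0 - f0 X < 0`. -/
def IsNegDomOf (f : Fin N → ((Fin k → ℝ) →ᵃ[ℝ] ℝ)) (f0 : (Fin k → ℝ) →ₗ[ℝ] ℝ)
    (X : Fin k → ℝ) (Δ : Set (Fin k → ℝ)) : Prop :=
  IsDomain f Δ ∧ X ∈ closure Δ ∧ ∀ y ∈ Δ, f0 y < f0 X

/-- `Δ` belongs to `𝒟⁺`: it is an arrangement domain on which `f0` is bounded
from below. -/
def MemDplus (f : Fin N → ((Fin k → ℝ) →ᵃ[ℝ] ℝ)) (f0 : (Fin k → ℝ) →ₗ[ℝ] ℝ)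
    (Δ : Set (Fin k → ℝ)) : Prop :=
  IsDomain f Δ ∧ BddBelow (f0 '' Δ)

/-- `Δ` belongs to `𝒟⁻`: it is an arrangement domain on which `f0` is bounded
from above. -/
def MemDminus (f : Fin N → ((Fin k → ℝ) →ᵃ[ℝ] ℝ)) (f0 : (Fin k → ℝ) →ₗ[ℝ] ℝ)
    (Δ : Set (Fin k → ℝ)) : Prop :=
  IsDomain f Δ ∧ BddAbove (f0 '' Δ)

/-- The set `W` (a hyperplane) separates `S` from `T`: they lie in different connected
components of the complement of `W`. -/
def Separates {α : Type*} [TopologicalSpace α] (W S T : Set α) : Prop :=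
  ∃ x ∈ S, ∃ y ∈ T, S ⊆ connectedComponentIn Wᶜ x ∧ T ⊆ connectedComponentIn Wᶜ y ∧
    connectedComponentIn Wᶜ x ≠ connectedComponentIn Wᶜ y

/-- The index set of `ℋ(Δ, Δ')`, the set of hyperplanes separating `Δ` from `Δ'`. -/
def SepSet (f : Fin N → ((Fin k → ℝ) →ᵃ[ℝ] ℝ)) (Δ Δ' : Set (Fin k → ℝ)) :
    Finset (Fin N) :=
  Finset.univ.filter fun j => Separates (Hyp f j) Δ Δ'

/-! ### Auxiliary lemmas -/

open scoped Topology

lemma sgnTrans {a b c : ℝ} (h1 : 0 < a * c) (h2 : 0 < b * c) : 0 < a * b := by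
  rcases lt_trichotomy c 0 with hc | hc | hc
  · have ha : a < 0 := by nlinarith
    have hb : b < 0 := by nlinarith
    exact mul_pos_of_neg_of_neg ha hb
  · rw [hc, mul_zero] at h1; exact absurd h1 (lt_irrefl 0)
  · have ha : 0 < a := by nlinarith
    have hb : 0 < b := by nlinarith
    exact mul_pos ha hb

lemma sgnTrans' {a b c : ℝ} (h1 : a * c < 0) (h2 : b * c < 0) : 0 < a * b := by
  rcases lt_trichotomy c 0 with hc | hc | hc
  · have ha : 0 < a := by nlinarith
    have hb : 0 < b := by nlinarith
    exact mul_pos ha hb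
  · rw [hc, mul_zero] at h1; exact absurd h1 (lt_irrefl 0)
  · have ha : a < 0 := by nlinarith
    have hb : b < 0 := by nlinarith
    exact mul_pos_of_neg_of_neg ha hb

lemma sgnChain {a b c : ℝ} (h1 : 0 < a * b) (h2 : 0 < b * c) : 0 < a * c := by
  have h2' : 0 < c * b := by rwa [mul_comm] at h2
  exact sgnTrans h1 h2'

lemma sgnOpp {a b c d : ℝ} (h1 : 0 < a * c) (h2 : 0 < b * d) (h3 : a * b < 0) :
    c * d < 0 := by
  by_contra hcd
  push_neg at hcd
  have h4 : (a * b) * (c * d) = (a * c) * (b * d) := by ring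
  have h5 : 0 < (a * b) * (c * d) := by rw [h4]; exact mul_pos h1 h2
  have h6 : (a * b) * (c * d) ≤ 0 := mul_nonpos_of_nonpos_of_nonneg h3.le hcd
  linarith

/-- The connected component of a point in the complement of a subfamily of the
hyperplanes is exactly the "orthant" of points having the same sign pattern. -/
lemma comp_eq_omega {ι : Type*} (g : ι → ((Fin k → ℝ) →ᵃ[ℝ] ℝ)) (P : ι → Prop)
    (x : Fin k → ℝ) (hx : ∀ i, P i → g i x ≠ 0) :
    connectedComponentIn {z | ∀ i, P i → g i z ≠ 0} x
      = {z | ∀ i, P i → 0 < g i z * g i x} := by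
  apply Subset.antisymm
  · intro z hz i hi
    have hconn : IsPreconnected (connectedComponentIn {z | ∀ i, P i → g i z ≠ 0} x) :=
      isPreconnected_connectedComponentIn
    have hsub := connectedComponentIn_subset {z | ∀ i, P i → g i z ≠ 0} x
    have hxmem : x ∈ connectedComponentIn {z | ∀ i, P i → g i z ≠ 0} x :=
      mem_connectedComponentIn (fun i hi => hx i hi)
    by_contra hle
    push_neg at hle
    have hzne : g i z ≠ 0 := hsub hz i hi
    have hxne : g i x ≠ 0 := hx i hi
    have hne : g i z * g i x ≠ 0 := mul_ne_zero hzne hxne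
    have hlt : g i z * g i x < 0 := lt_of_le_of_ne hle hne
    have hcont : ContinuousOn (g i)
        (connectedComponentIn {z | ∀ i, P i → g i z ≠ 0} x) :=
      (g i).continuous_of_finiteDimensional.continuousOn
    rcases mul_neg_iff.mp hlt with ⟨h1, h2⟩ | ⟨h1, h2⟩
    · have hIcc := hconn.intermediate_value hxmem hz hcont
      have h0 : (0:ℝ) ∈ Icc (g i x) (g i z) := ⟨h2.le, h1.le⟩
      obtain ⟨w, hw, hw0⟩ := hIcc h0
      exact hsub hw i hi hw0
    · have hIcc := hconn.intermediate_value hz hxmem hcont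
      have h0 : (0:ℝ) ∈ Icc (g i z) (g i x) := ⟨h1.le, h2.le⟩
      obtain ⟨w, hw, hw0⟩ := hIcc h0
      exact hsub hw i hi hw0
  · have hconv : Convex ℝ {z | ∀ i, P i → 0 < g i z * g i x} := by
      have hrw : {z | ∀ i, P i → 0 < g i z * g i x}
          = ⋂ i, ⋂ (_ : P i), {z | 0 < g i z * g i x} := by
        ext z; simp
      rw [hrw]
      refine convex_iInter fun i => convex_iInter fun hi => ?_
      rcases (hx i hi).lt_or_gt with hc | hc
      · have hrw2 : {z | 0 < g i z * g i x} = (g i) ⁻¹' (Iio 0) := by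
          ext z
          simp only [mem_setOf_eq, mem_preimage, mem_Iio]
          constructor
          · intro hmul; nlinarith
          · intro hmul; exact mul_pos_of_neg_of_neg hmul hc
        rw [hrw2]; exact (convex_Iio (0:ℝ)).affine_preimage (g i)
      · have hrw2 : {z | 0 < g i z * g i x} = (g i) ⁻¹' (Ioi 0) := by
          ext z
          simp only [mem_setOf_eq, mem_preimage, mem_Ioi]
          constructor
          · intro hmul; nlinarith
          · intro hmul; exact mul_pos hmul hc
        rw [hrw2]; exact (convex_Ioi (0:ℝ)).affine_preimage (g i)
    refine hconv.isPreconnected.subset_connectedComponentIn ?_ ?_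
    · intro i hi; exact mul_self_pos.mpr (hx i hi)
    · intro z hz i hi; exact left_ne_zero_of_mul (ne_of_gt (hz i hi))

lemma domain_eq_omega (f : Fin N → ((Fin k → ℝ) →ᵃ[ℝ] ℝ)) {x : Fin k → ℝ}
    (hx : x ∈ HypCompl f) :
    connectedComponentIn (HypCompl f) x = {z | ∀ j, 0 < f j z * f j x} := by
  have h1 : HypCompl f = {z | ∀ j : Fin N, True → f j z ≠ 0} := by
    ext z; simp [HypCompl]
  rw [h1, comp_eq_omega f (fun _ => True) x (fun i _ => hx i)]
  ext z; simp

lemma cone_eq_omega (f : Fin N → ((Fin k → ℝ) →ᵃ[ℝ] ℝ)) (S : Finset (Fin N))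
    {x : Fin k → ℝ} (hx : ∀ j ∈ S, f j x ≠ 0) :
    connectedComponentIn {z | ∀ j ∈ S, f j z ≠ 0} x
      = {z | ∀ j ∈ S, 0 < f j z * f j x} :=
  comp_eq_omega f (fun j => j ∈ S) x hx

lemma hyp_compl_comp (f : Fin N → ((Fin k → ℝ) →ᵃ[ℝ] ℝ)) (j : Fin N)
    {a : Fin k → ℝ} (ha : f j a ≠ 0) :
    connectedComponentIn (Hyp f j)ᶜ a = {z | 0 < f j z * f j a} := by
  have h1 : (Hyp f j)ᶜ = {z | ∀ i : Fin N, i = j → f i z ≠ 0} := by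
    ext z; simp [Hyp]
  rw [h1, comp_eq_omega f (fun i => i = j) a (fun i hi => by rw [hi]; exact ha)]
  ext z; simp

lemma separates_iff (f : Fin N → ((Fin k → ℝ) →ᵃ[ℝ] ℝ)) {x x' : Fin k → ℝ}
    (hx : x ∈ HypCompl f) (hx' : x' ∈ HypCompl f) (j : Fin N) :
    Separates (Hyp f j) {z | ∀ i, 0 < f i z * f i x} {z | ∀ i, 0 < f i z * f i x'}
      ↔ f j x * f j x' < 0 := by
  constructor
  · rintro ⟨a, ha, b, hb, hsa, hsb, hne⟩
    have h1 : 0 < f j a * f j x := ha j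
    have h2 : 0 < f j b * f j x' := hb j
    have hane : f j a ≠ 0 := left_ne_zero_of_mul (ne_of_gt h1)
    have hbne : f j b ≠ 0 := left_ne_zero_of_mul (ne_of_gt h2)
    have hab : f j a * f j b < 0 := by
      by_contra hc
      push_neg at hc
      have hpos : 0 < f j a * f j b :=
        lt_of_le_of_ne hc (Ne.symm (mul_ne_zero hane hbne))
      have hbmem : b ∈ connectedComponentIn (Hyp f j)ᶜ a := by
        rw [hyp_compl_comp f j hane]
        have : 0 < f j b * f j a := by rwa [mul_comm] at hpos
        exact this
      exact hne (connectedComponentIn_eq hbmem)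
    exact sgnOpp h1 h2 hab
  · intro hlt
    refine ⟨x, fun i => mul_self_pos.mpr (hx i), x',
      fun i => mul_self_pos.mpr (hx' i), ?_, ?_, ?_⟩
    · intro z hz
      rw [hyp_compl_comp f j (hx j)]
      exact hz j
    · intro z hz
      rw [hyp_compl_comp f j (hx' j)]
      exact hz j
    · rw [hyp_compl_comp f j (hx j), hyp_compl_comp f j (hx' j)]
      intro heq
      have hxm : x ∈ {z | 0 < f j z * f j x} := mul_self_pos.mpr (hx j)
      rw [heq] at hxm
      have : 0 < f j x * f j x' := hxm
      linarith

/-- Given a vertex `X` of index set `S`, the linear parts of the `f j`, `j ∈ S`,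
form a basis of the dual: any prescribed values can be achieved. -/
lemma exists_dir (f : Fin N → ((Fin k → ℝ) →ᵃ[ℝ] ℝ)) (hf : Generic f)
    (S : Finset (Fin N)) (X : Fin k → ℝ) (hX : IsVertexOf f S X) (c : Fin N → ℝ) :
    ∃ v : Fin k → ℝ, ∀ j ∈ S, (f j).linear v = c j := by
  classical
  set L : (Fin k → ℝ) →ₗ[ℝ] ({j // j ∈ S} → ℝ) :=
    LinearMap.pi (fun j : {j // j ∈ S} => (f (j : Fin N)).linear) with hL
  have hinj : Function.Injective L := by
    rw [injective_iff_map_eq_zero]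
    intro v hv
    have hzero : ∀ j ∈ S, (f j).linear v = 0 := by
      intro j hj
      exact congrFun hv ⟨j, hj⟩
    have hV : ∀ j ∈ S, f j (v + X) = 0 := by
      intro j hj
      have hvadd := (f j).map_vadd X v
      rw [vadd_eq_add, vadd_eq_add] at hvadd
      rw [hvadd, hzero j hj, hX.2 j hj, add_zero]
    obtain ⟨w, hw, hwu⟩ := hf.2.1 S hX.1
    have e1 : v + X = w := hwu _ hV
    have e2 : X = w := hwu _ hX.2
    have : v + X = X := by rw [e1, e2]
    simpa [add_eq_right] using this
  have hfr : Module.finrank ℝ (Fin k → ℝ) = Module.finrank ℝ ({j // j ∈ S} → ℝ) := by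
    simp [Module.finrank_pi, Fintype.card_coe, hX.1]
  have hsurj : Function.Surjective L :=
    (LinearMap.injective_iff_surjective_of_finrank_eq_finrank hfr).mp hinj
  obtain ⟨v, hv⟩ := hsurj (fun j => c (j : Fin N))
  exact ⟨v, fun j hj => congrFun hv ⟨j, hj⟩⟩

/-- let `D(X',X'')` be the set of domains `Δ ∈ 𝒟⁺` with `Δ ⊆ C⁺_{X'}`
and `X''` in the closure of `Δ`, and let `H h` be an arrangement hyperplane containing
`X''` but not `X'`. Then every `Δ ∈ D(X',X'')` has a unique partner `Δ' ∈ D(X',X'')`,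
`Δ' ≠ Δ`, with `ℋ(Δ,Δ') = {H h}`; so `D(X',X'')` is partitioned into pairs of domains
adjacent across `H h`. -/
theorem stmt_15 {k N : ℕ} (hk : 1 ≤ k) (hkN : k ≤ N)
    (f : Fin N → ((Fin k → ℝ) →ᵃ[ℝ] ℝ)) (hf : Generic f)
    (f0 : (Fin k → ℝ) →ₗ[ℝ] ℝ) (hf0 : GenericLin f f0)
    (S' S'' : Finset (Fin N)) (X' X'' : Fin k → ℝ)
    (hX' : IsVertexOf f S' X') (hX'' : IsVertexOf f S'' X'')
    (C' : Set (Fin k → ℝ)) (hC' : IsPosCone f f0 S' X' C')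
    (h : Fin N) (hh1 : f h X'' = 0) (hh2 : f h X' ≠ 0) :
    ∀ Δ : Set (Fin k → ℝ), (MemDplus f f0 Δ ∧ Δ ⊆ C' ∧ X'' ∈ closure Δ) →
      ∃! Δ' : Set (Fin k → ℝ),
        (MemDplus f f0 Δ' ∧ Δ' ⊆ C' ∧ X'' ∈ closure Δ') ∧ Δ' ≠ Δ ∧
          SepSet f Δ Δ' = {h} := by
  classical
  obtain ⟨hS'card, hS'zero⟩ := hX'
  obtain ⟨hS''card, hS''zero⟩ := hX''
  -- every hyperplane through X'' has index in S''
  have hnotS'' : ∀ j, j ∉ S'' → f j X'' ≠ 0 := by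
    intro j hj hj0
    have hcard : (insert j S'').card = k + 1 := by
      rw [Finset.card_insert_of_notMem hj, hS''card]
    refine hf.2.2 _ hcard ⟨X'', fun i hi => ?_⟩
    rcases Finset.mem_insert.mp hi with rfl | hi
    · exact hj0
    · exact hS''zero i hi
  have hhS'' : h ∈ S'' := by
    by_contra hns
    exact hnotS'' h hns hh1
  have hhS' : h ∉ S' := fun hmem => hh2 (hS'zero h hmem)
  -- description of C'
  obtain ⟨⟨y0, hy0ne, hC'eq⟩, hC'pos⟩ := hC'
  have hC'omega : C' = {z | ∀ j ∈ S', 0 < f j z * f j y0} := by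
    rw [hC'eq]; exact cone_eq_omega f S' hy0ne
  rintro Δ ⟨⟨hΔdom, hΔbdd⟩, hΔC', hX''cl⟩
  obtain ⟨x, hxH, hΔeq⟩ := hΔdom
  have hΔomega : Δ = {z | ∀ i, 0 < f i z * f i x} := by
    rw [hΔeq]; exact domain_eq_omega f hxH
  have hxΔ : x ∈ Δ := by
    rw [hΔomega]; intro i; exact mul_self_pos.mpr (hxH i)
  -- sign of f j at X'' agrees with the sign on Δ  (j off S'')
  have hXsign : ∀ j, f j X'' ≠ 0 → 0 < f j X'' * f j x := by
    intro j hj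
    have hclosed : IsClosed {z | 0 ≤ f j z * f j x} := by
      have : {z | 0 ≤ f j z * f j x} = (fun z => f j z * f j x) ⁻¹' (Ici 0) := rfl
      rw [this]
      exact isClosed_Ici.preimage
        ((f j).continuous_of_finiteDimensional.mul continuous_const)
    have hsub : Δ ⊆ {z | 0 ≤ f j z * f j x} := by
      rw [hΔomega]; intro z hz; exact (hz j).le
    have hXm : X'' ∈ {z | 0 ≤ f j z * f j x} := closure_minimal hsub hclosed hX''cl
    exact lt_of_le_of_ne hXm (Ne.symm (mul_ne_zero hj (hxH j)))
  -- choose direction v realizing the flipped sign pattern on S''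
  obtain ⟨v, hv⟩ := exists_dir f hf S'' X'' ⟨hS''card, hS''zero⟩
    (fun j => if j = h then -(f h x) else f j x)
  have hval : ∀ (t : ℝ) (j : Fin N),
      f j (t • v + X'') = t * (f j).linear v + f j X'' := by
    intro t j
    have hvadd := (f j).map_vadd X'' (t • v)
    rw [vadd_eq_add, vadd_eq_add, LinearMap.map_smul, smul_eq_mul] at hvadd
    exact hvadd
  have hvalS : ∀ (t : ℝ), ∀ j ∈ S'',
      f j (t • v + X'') = t * (if j = h then -(f h x) else f j x) := by
    intro t j hj
    rw [hval t j, hS''zero j hj, add_zero, hv j hj]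
  -- openness and choice of the scale t0
  set U : Set (Fin k → ℝ) := {z | ∀ j, f j X'' ≠ 0 → 0 < f j z * f j x} with hU
  have hUopen : IsOpen U := by
    have hrw : U = ⋂ j ∈ Finset.univ.filter (fun j => f j X'' ≠ 0),
        {z | 0 < f j z * f j x} := by
      ext z; simp [hU]
    rw [hrw]
    refine isOpen_biInter_finset fun j _ => ?_
    exact isOpen_lt continuous_const
      ((f j).continuous_of_finiteDimensional.mul continuous_const)
  have hXU : X'' ∈ U := fun j hj => hXsign j hj
  obtain ⟨ε, hε, hball⟩ := Metric.isOpen_iff.mp hUopen X'' hXU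
  set t0 : ℝ := ε / (‖v‖ + 1) with ht0
  have ht0pos : 0 < t0 := div_pos hε (by positivity)
  have hmemU : ∀ s : ℝ, s ∈ Ioc 0 t0 → (s • v + X'') ∈ U := by
    intro s hs
    apply hball
    rw [Metric.mem_ball, dist_eq_norm, add_sub_cancel_right, norm_smul,
      Real.norm_eq_abs, abs_of_pos hs.1]
    have h1 : s * ‖v‖ ≤ t0 * ‖v‖ :=
      mul_le_mul_of_nonneg_right hs.2 (norm_nonneg v)
    have h2 : t0 * ‖v‖ < t0 * (‖v‖ + 1) := by
      exact mul_lt_mul_of_pos_left (by linarith) ht0pos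
    have h3 : t0 * (‖v‖ + 1) = ε := div_mul_cancel₀ ε (by positivity)
    linarith
  have hB : ∀ s : ℝ, s ∈ Ioc 0 t0 → ∀ j, j ∉ S'' →
      0 < f j (s • v + X'') * f j x := by
    intro s hs j hj
    exact hmemU s hs j (hnotS'' j hj)
  set x' : Fin k → ℝ := t0 • v + X'' with hx'def
  -- x' avoids all the hyperplanes
  have hx'H : x' ∈ HypCompl f := by
    intro j
    by_cases hj : j ∈ S''
    · rw [hx'def, hvalS t0 j hj]
      refine mul_ne_zero (ne_of_gt ht0pos) ?_
      by_cases hjh : j = h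
      · subst hjh; simp only [if_pos rfl]; exact neg_ne_zero.mpr (hxH j)
      · simp only [if_neg hjh]; exact hxH j
    · exact left_ne_zero_of_mul (ne_of_gt (hB t0 ⟨ht0pos, le_refl t0⟩ j hj))
  -- signs of x' versus x
  have hsign' : ∀ j, j ≠ h → 0 < f j x' * f j x := by
    intro j hjh
    by_cases hj : j ∈ S''
    · rw [hx'def, hvalS t0 j hj, if_neg hjh, mul_assoc]
      exact mul_pos ht0pos (mul_self_pos.mpr (hxH j))
    · exact hB t0 ⟨ht0pos, le_refl t0⟩ j hj
  have hsignh : f h x' * f h x < 0 := by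
    rw [hx'def, hvalS t0 h hhS'', if_pos rfl]
    have : t0 * -f h x * f h x = -(t0 * (f h x * f h x)) := by ring
    rw [this]
    exact neg_neg_iff_pos.mpr (mul_pos ht0pos (mul_self_pos.mpr (hxH h)))
  -- the partner domain
  set Δ' : Set (Fin k → ℝ) := {z | ∀ i, 0 < f i z * f i x'} with hΔ'def
  have hΔ'dom : IsDomain f Δ' := ⟨x', hx'H, (domain_eq_omega f hx'H).symm⟩
  have hΔ'C' : Δ' ⊆ C' := by
    rw [hC'omega]
    intro z hz j hj
    have hjh : j ≠ h := fun hc => hhS' (hc ▸ hj)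
    have h1 : 0 < f j z * f j x := sgnChain (hz j) (hsign' j hjh)
    have h2 : 0 < f j x * f j y0 := by
      have := hΔC' hxΔ
      rw [hC'omega] at this
      exact this j hj
    exact sgnChain h1 h2
  have hΔ'bdd : BddBelow (f0 '' Δ') := by
    refine ⟨f0 X', ?_⟩
    rintro r ⟨z, hz, rfl⟩
    exact (hC'pos z (hΔ'C' hz)).le
  have hΔ'cl : X'' ∈ closure Δ' := by
    have htend : Tendsto (fun s : ℝ => s • v + X'') (𝓝[>] (0:ℝ)) (𝓝 X'') := by
      have hcont : Continuous (fun s : ℝ => s • v + X'') :=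
        (continuous_id.smul continuous_const).add continuous_const
      have := hcont.tendsto 0
      rw [zero_smul, zero_add] at this
      exact this.mono_left nhdsWithin_le_nhds
    refine mem_closure_of_tendsto htend ?_
    have hIoc : Ioc (0:ℝ) t0 ∈ 𝓝[>] (0:ℝ) :=
      Ioc_mem_nhdsGT_of_mem ⟨le_refl 0, ht0pos⟩
    refine Filter.mem_of_superset hIoc ?_
    intro s hs
    intro j
    by_cases hj : j ∈ S''
    · rw [hvalS s j hj, hx'def, hvalS t0 j hj]
      have hcne : (if j = h then -(f h x) else f j x) ≠ 0 := by
        by_cases hjh : j = h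
        · subst hjh; simp only [if_pos rfl]; exact neg_ne_zero.mpr (hxH j)
        · simp only [if_neg hjh]; exact hxH j
      have : s * (if j = h then -f h x else f j x) * (t0 * (if j = h then -f h x else f j x))
          = (s * t0) * ((if j = h then -f h x else f j x) * (if j = h then -f h x else f j x)) := by
        ring
      rw [this]
      exact mul_pos (mul_pos hs.1 ht0pos) (mul_self_pos.mpr hcne)
    · have h1 : 0 < f j (s • v + X'') * f j x := hB s hs j hj
      have h2 : 0 < f j x' * f j x := hB t0 ⟨ht0pos, le_refl t0⟩ j hj
      exact sgnTrans h1 h2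
  have hΔ'ne : Δ' ≠ Δ := by
    intro hc
    have hx'Δ' : x' ∈ Δ' := fun i => mul_self_pos.mpr (hx'H i)
    rw [hc, hΔomega] at hx'Δ'
    have := hx'Δ' h
    linarith
  have hΔ'sep : SepSet f Δ Δ' = {h} := by
    apply Finset.ext
    intro j
    simp only [SepSet, Finset.mem_filter, Finset.mem_univ, true_and,
      Finset.mem_singleton]
    rw [hΔomega, hΔ'def, separates_iff f hxH hx'H j]
    constructor
    · intro hlt
      by_contra hjh
      have := hsign' j hjh
      rw [mul_comm] at this
      linarith
    · rintro rfl
      rw [mul_comm] at hsignh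
      exact hsignh
  refine ⟨Δ', ⟨⟨⟨hΔ'dom, hΔ'bdd⟩, hΔ'C', hΔ'cl⟩, hΔ'ne, hΔ'sep⟩, ?_⟩
  -- uniqueness
  rintro Δ₂ ⟨⟨⟨hΔ₂dom, _⟩, _, _⟩, _, hsep₂⟩
  obtain ⟨x₂, hx₂H, hΔ₂eq⟩ := hΔ₂dom
  have hΔ₂omega : Δ₂ = {z | ∀ i, 0 < f i z * f i x₂} := by
    rw [hΔ₂eq]; exact domain_eq_omega f hx₂H
  have hsepiff : ∀ j, Separates (Hyp f j) Δ Δ₂ ↔ j = h := by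
    intro j
    constructor
    · intro hs
      have hmem : j ∈ SepSet f Δ Δ₂ :=
        Finset.mem_filter.mpr ⟨Finset.mem_univ j, hs⟩
      rw [hsep₂] at hmem
      exact Finset.mem_singleton.mp hmem
    · rintro rfl
      have hmem : j ∈ ({j} : Finset (Fin N)) := Finset.mem_singleton_self j
      rw [← hsep₂] at hmem
      exact (Finset.mem_filter.mp hmem).2
  have hs_h : f h x * f h x₂ < 0 := by
    have hs := (hsepiff h).mpr rfl
    rw [hΔomega, hΔ₂omega] at hs
    exact (separates_iff f hxH hx₂H h).mp hs
  have hs_ne : ∀ j, j ≠ h → 0 < f j x * f j x₂ := by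
    intro j hj
    have hns : ¬ Separates (Hyp f j) Δ Δ₂ := fun hs => hj ((hsepiff j).mp hs)
    rw [hΔomega, hΔ₂omega] at hns
    have hnlt : ¬ (f j x * f j x₂ < 0) := fun hlt =>
      hns ((separates_iff f hxH hx₂H j).mpr hlt)
    rcases (mul_ne_zero (hxH j) (hx₂H j)).lt_or_gt with hc | hc
    · exact absurd hc hnlt
    · exact hc
  have hsame : ∀ j, 0 < f j x₂ * f j x' := by
    intro j
    by_cases hjh : j = h
    · subst hjh
      have h1 : f j x₂ * f j x < 0 := by rw [mul_comm] at hs_h; exact hs_h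
      exact sgnTrans' h1 hsignh
    · have h1 : 0 < f j x₂ * f j x := by
        have := hs_ne j hjh; rwa [mul_comm] at this
      exact sgnTrans h1 (hsign' j hjh)
  rw [hΔ₂omega, hΔ'def]
  ext z
  simp only [mem_setOf_eq]
  constructor
  · intro hz j
    exact sgnChain (hz j) (hsame j)
  · intro hz j
    have := hsame j
    rw [mul_comm] at this
    exact sgnChain (hz j) this

end HypArr
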